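/- (Key inequality, Lemma 5.1) Let L = H⊕H⊕Λ as above, let r = (a₁,a₂)(b₁,b₂)(c) ∈ L with (a₁,a₂) ≠ (0,0), and let ω = (τ,1)(u, -τu-(z,z)/2)(z) with τ₂ = Im τ > 0 and 2τ₂u₂+(z₂,z₂) > 0. Set A = ⟨ω,r⟩ and ũ₂ = (2τ₂u₂+(z₂,z₂))/(2τ₂). Then |A| - ⟨r,r⟩·τ₂/(2|a₂τ - a₁|) ≥ |a₂τ - a₁|·ũ₂. -/

import Mathlib

open Complex

/-- The ℂ-bilinear extension of the form on `Λ` (given by the real matrix `G`)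
to `Λ ⊗ ℂ ≅ ℂ¹⁶`. -/
noncomputable def pairC (G : Matrix (Fin 16) (Fin 16) ℝ) (x y : Fin 16 → ℂ) : ℂ :=
  ∑ i : Fin 16, ∑ j : Fin 16, (G i j : ℂ) * x i * y j

/-- The real form on `Λ ⊗ ℝ ≅ ℝ¹⁶` given by `G`. -/
noncomputable def pairR (G : Matrix (Fin 16) (Fin 16) ℝ) (x y : Fin 16 → ℝ) : ℝ :=
  ∑ i : Fin 16, ∑ j : Fin 16, G i j * x i * y j

/-- The ℂ-bilinear pairing on `L ⊗ ℂ` where `L = H ⊕ H ⊕ Λ`: an element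
`(a₁,a₂)(b₁,b₂)(c)` denotes `a₁x₁+a₂x₂+b₁y₁+b₂y₂+c`, and
`⟨(a₁,a₂)(b₁,b₂)(c),(a₁',a₂')(b₁',b₂')(c')⟩ = a₁b₁'+a₂b₂'+b₁a₁'+b₂a₂'+(c,c')`. -/
noncomputable def pairL (G : Matrix (Fin 16) (Fin 16) ℝ)
    (a₁ a₂ b₁ b₂ : ℂ) (c : Fin 16 → ℂ)
    (a₁' a₂' b₁' b₂' : ℂ) (c' : Fin 16 → ℂ) : ℂ :=
  a₁ * b₁' + a₂ * b₂' + b₁ * a₁' + b₂ * a₂' + pairC G c c'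

lemma pairC_re (G : Matrix (Fin 16) (Fin 16) ℝ) (x y : Fin 16 → ℂ) :
    (pairC G x y).re = pairR G (fun i => (x i).re) (fun i => (y i).re)
      - pairR G (fun i => (x i).im) (fun i => (y i).im) := by
  simp only [pairC, pairR, Complex.re_sum, Complex.mul_re, Complex.mul_im,
    Complex.ofReal_re, Complex.ofReal_im, ← Finset.sum_sub_distrib]
  refine Finset.sum_congr rfl fun i _ => Finset.sum_congr rfl fun j _ => by ring

lemma pairC_im (G : Matrix (Fin 16) (Fin 16) ℝ) (x y : Fin 16 → ℂ) :
    (pairC G x y).im = pairR G (fun i => (x i).re) (fun i => (y i).im)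
      + pairR G (fun i => (x i).im) (fun i => (y i).re) := by
  simp only [pairC, pairR, Complex.im_sum, Complex.mul_re, Complex.mul_im,
    Complex.ofReal_re, Complex.ofReal_im, ← Finset.sum_add_distrib]
  refine Finset.sum_congr rfl fun i _ => Finset.sum_congr rfl fun j _ => by ring

lemma pairR_symm (G : Matrix (Fin 16) (Fin 16) ℝ) (hsym : ∀ i j, G i j = G j i)
    (x y : Fin 16 → ℝ) : pairR G x y = pairR G y x := by
  rw [pairR, Finset.sum_comm]
  refine Finset.sum_congr rfl fun i _ => Finset.sum_congr rfl fun j _ => by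
    rw [hsym j i]; ring

lemma pairR_zero_right (G : Matrix (Fin 16) (Fin 16) ℝ) (x : Fin 16 → ℝ) :
    pairR G x (fun _ => 0) = 0 := by simp [pairR]

lemma pairR_comb (G : Matrix (Fin 16) (Fin 16) ℝ) (s t r : ℝ) (x y v : Fin 16 → ℝ) :
    pairR G (fun i => s * x i + t * y i + r * v i) (fun i => s * x i + t * y i + r * v i)
      = s * s * pairR G x x + s * t * pairR G x y + s * r * pairR G x v
        + t * s * pairR G y x + t * t * pairR G y y + t * r * pairR G y v
        + r * s * pairR G v x + r * t * pairR G v y + r * r * pairR G v v := by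
  simp only [pairR, Finset.mul_sum, ← Finset.sum_add_distrib]
  refine Finset.sum_congr rfl fun i _ => Finset.sum_congr rfl fun j _ => by ring

/-- Key inequality (Lemma 5.1): for `r = (a₁,a₂)(b₁,b₂)(c) ∈ L` with
`(a₁,a₂) ≠ (0,0)` and `ω = (τ,1)(u,-τu-(z,z)/2)(z)` with `τ₂ > 0` and
`2τ₂u₂+(z₂,z₂) > 0`, setting `A = ⟨ω,r⟩` and `ũ₂ = (2τ₂u₂+(z₂,z₂))/(2τ₂)`,
one has `|A| - ⟨r,r⟩τ₂/(2|a₂τ-a₁|) ≥ |a₂τ-a₁|·ũ₂`. -/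
theorem stmt12 (G : Matrix (Fin 16) (Fin 16) ℝ)
    (hsym : ∀ i j, G i j = G j i)
    (hneg : ∀ v : Fin 16 → ℝ, v ≠ 0 → pairR G v v < 0)
    (a₁ a₂ b₁ b₂ : ℤ) (c : Fin 16 → ℤ) (ha : ¬(a₁ = 0 ∧ a₂ = 0))
    (τ u : ℂ) (z : Fin 16 → ℂ) (hτ : 0 < τ.im)
    (hu : 0 < 2 * τ.im * u.im + pairR G (fun i => (z i).im) (fun i => (z i).im)) :
    ‖(a₂ : ℂ) * τ - (a₁ : ℂ)‖
        * ((2 * τ.im * u.im + pairR G (fun i => (z i).im) (fun i => (z i).im))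
            / (2 * τ.im))
      ≤ ‖pairL G τ 1 u (-τ * u - pairC G z z / 2) z
            (a₁ : ℂ) (a₂ : ℂ) (b₁ : ℂ) (b₂ : ℂ) (fun i => (c i : ℂ))‖
        - (2 * ((a₁ : ℝ) * b₁ + (a₂ : ℝ) * b₂)
            + pairR G (fun i => (c i : ℝ)) (fun i => (c i : ℝ))) * τ.im
          / (2 * ‖(a₂ : ℂ) * τ - (a₁ : ℂ)‖) := by
  have hsymm := pairR_symm G hsym
  set z1 : Fin 16 → ℝ := fun i => (z i).re with hz1
  set z2 : Fin 16 → ℝ := fun i => (z i).im with hz2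
  set cR : Fin 16 → ℝ := fun i => ((c i : ℝ)) with hcRdef
  set q1 : ℝ := pairR G z1 z1 with hq1
  set q2 : ℝ := pairR G z2 z2 with hq2d
  set q12 : ℝ := pairR G z1 z2 with hq12
  set p1 : ℝ := pairR G z1 cR with hp1
  set p2 : ℝ := pairR G z2 cR with hp2
  set cc : ℝ := pairR G cR cR with hccd
  set β : ℝ := (a₂ : ℝ) * τ.re - (a₁ : ℝ) with hβ
  set γ : ℝ := (a₂ : ℝ) * τ.im with hγ
  set m : ℝ := ‖(a₂ : ℂ) * τ - (a₁ : ℂ)‖ with hmdef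
  set A : ℂ := pairL G τ 1 u (-τ * u - pairC G z z / 2) z
      (a₁ : ℂ) (a₂ : ℂ) (b₁ : ℂ) (b₂ : ℂ) (fun i => (c i : ℂ)) with hAdef
  set N : ℝ := 2 * τ.im * u.im + q2 with hNdef
  set R : ℝ := 2 * ((a₁ : ℝ) * b₁ + (a₂ : ℝ) * b₂) + cc with hRdef
  have hαre : ((a₂ : ℂ) * τ - (a₁ : ℂ)).re = β := by
    simp [hβ, Complex.sub_re, Complex.mul_re]
  have hαim : ((a₂ : ℂ) * τ - (a₁ : ℂ)).im = γ := by
    simp [hγ, Complex.sub_im, Complex.mul_im]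
  have hα : ((a₂ : ℂ) * τ - (a₁ : ℂ)) ≠ 0 := by
    intro h
    rcases eq_or_ne a₂ 0 with h2 | h2
    · have ha1 : a₁ ≠ 0 := fun h1 => ha ⟨h1, h2⟩
      have := congrArg Complex.re h
      rw [hαre] at this
      simp [hβ, h2] at this
      exact ha1 (by exact_mod_cast this)
    · have := congrArg Complex.im h
      rw [hαim] at this
      simp [hγ] at this
      rcases this with h' | h'
      · exact h2 (by exact_mod_cast h')
      · linarith
  have hm0 : 0 < m := by rw [hmdef]; exact norm_pos_iff.mpr hα
  have hm2 : m ^ 2 = β ^ 2 + γ ^ 2 := by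
    rw [hmdef, Complex.sq_norm, Complex.normSq_apply, hαre, hαim]; ring
  -- express the complex pairings in coordinates
  have hqc : pairC G z z = ((q1 - q2 : ℝ) : ℂ) + ((2 * q12 : ℝ) : ℂ) * I := by
    apply Complex.ext
    · rw [pairC_re]
      simp [hq1, hq2d, hz1, hz2]
    · rw [pairC_im]
      simp only [Complex.add_im, Complex.ofReal_im, Complex.mul_im, Complex.I_im,
        Complex.I_re, Complex.ofReal_re]
      rw [← hz1, ← hz2, ← hq12, hsymm z2 z1, ← hq12]
      ring
  have hpcc : pairC G z (fun i => ((c i : ℤ) : ℂ)) = ((p1 : ℝ) : ℂ) + ((p2 : ℝ) : ℂ) * I := by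
    apply Complex.ext
    · rw [pairC_re]
      simp only [Complex.intCast_re, Complex.intCast_im]
      rw [← hz1, ← hcRdef]
      simp [pairR_zero_right, hp1]
    · rw [pairC_im]
      simp only [Complex.intCast_re, Complex.intCast_im]
      rw [← hz1, ← hz2, ← hcRdef]
      simp [pairR_zero_right, hp2]
  have hAc : A = τ * (b₁ : ℂ) + (b₂ : ℂ) + u * (a₁ : ℂ)
      + (-τ * u - (((q1 - q2 : ℝ) : ℂ) + ((2 * q12 : ℝ) : ℂ) * I) / 2) * (a₂ : ℂ)
      + (((p1 : ℝ) : ℂ) + ((p2 : ℝ) : ℂ) * I) := by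
    rw [hAdef, pairL, hqc, hpcc]; ring
  have hAre : A.re = τ.re * (b₁ : ℝ) + (b₂ : ℝ) + u.re * (a₁ : ℝ)
      + (-(τ.re * u.re - τ.im * u.im) - (q1 - q2) / 2) * (a₂ : ℝ) + p1 := by
    rw [hAc]
    simp [Complex.add_re, Complex.sub_re, Complex.mul_re, Complex.mul_im,
      Complex.neg_re, Complex.neg_im, Complex.div_re, Complex.div_im,
      Complex.normSq_apply]
  have hAim : A.im = τ.im * (b₁ : ℝ) + u.im * (a₁ : ℝ)
      + (-(τ.re * u.im + τ.im * u.re) - q12) * (a₂ : ℝ) + p2 := by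
    rw [hAc]
    simp [Complex.add_im, Complex.sub_im, Complex.mul_re, Complex.mul_im,
      Complex.neg_re, Complex.neg_im, Complex.div_re, Complex.div_im,
      Complex.normSq_apply]
  -- the auxiliary vector w and its norm
  set w : Fin 16 → ℝ := fun i => γ * z1 i + (-β) * z2 i + (-τ.im) * cR i with hwdef
  have hWle : pairR G w w ≤ 0 := by
    rcases eq_or_ne w 0 with h | h
    · rw [h]
      simp [pairR]
    · exact (hneg w h).le
  have hWexp : pairR G w w = γ * γ * q1 + β * β * q2 + τ.im * τ.im * cc
      - 2 * γ * β * q12 - 2 * γ * τ.im * p1 + 2 * β * τ.im * p2 := by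
    rw [hwdef, pairR_comb]
    rw [hsymm z2 z1, hsymm cR z1, hsymm cR z2, ← hq1, ← hq2d, ← hq12, ← hp1, ← hp2, ← hccd]
    ring
  -- the key identity
  have hid : 2 * τ.im * (γ * A.re - β * A.im)
      = τ.im ^ 2 * R + (β ^ 2 + γ ^ 2) * N - pairR G w w := by
    rw [hAre, hAim, hWexp, hRdef, hNdef, hβ, hγ]
    ring
  -- bound via |Im(conj α * A)| ≤ |α||A|
  have himle : γ * A.re - β * A.im ≤ m * ‖A‖ := by
    have h1 : γ * A.re - β * A.im
        = -(((starRingEnd ℂ) ((a₂ : ℂ) * τ - (a₁ : ℂ)) * A).im) := by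
      simp only [Complex.mul_im, Complex.conj_re, Complex.conj_im, hαre, hαim]
      ring
    calc γ * A.re - β * A.im
        = -(((starRingEnd ℂ) ((a₂ : ℂ) * τ - (a₁ : ℂ)) * A).im) := h1
      _ ≤ |(((starRingEnd ℂ) ((a₂ : ℂ) * τ - (a₁ : ℂ)) * A).im)| := neg_le_abs _
      _ ≤ ‖(starRingEnd ℂ) ((a₂ : ℂ) * τ - (a₁ : ℂ)) * A‖ :=
          Complex.abs_im_le_norm _
      _ = m * ‖A‖ := by rw [norm_mul, Complex.norm_conj, hmdef]
  have key : τ.im ^ 2 * R + (β ^ 2 + γ ^ 2) * N ≤ 2 * τ.im * (m * ‖A‖) := by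
    have h2 := mul_le_mul_of_nonneg_left himle (by positivity : (0:ℝ) ≤ 2 * τ.im)
    linarith [hWle, hid]
  -- conclude
  have e : m * (N / (2 * τ.im)) + R * τ.im / (2 * m)
      = (τ.im ^ 2 * R + (β ^ 2 + γ ^ 2) * N) / (2 * τ.im * m) := by
    rw [← hm2]
    field_simp
    ring
  have hfin : m * (N / (2 * τ.im)) + R * τ.im / (2 * m) ≤ ‖A‖ := by
    rw [e, div_le_iff₀ (by positivity)]
    have e2 : ‖A‖ * (2 * τ.im * m) = 2 * τ.im * (m * ‖A‖) := by ring
    linarith [key]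
  linarith [hfin]
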